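/- Let A = !![a, b; c, d] be a real 2×2 matrix such that trace(A) < 0 and det(A) > 0 (so the origin is an attractor), m_R + p > 0 (the system is reactive), and p > |m_T| (so A has two distinct real eigenvalues). Let p_R = √(p² − m_T²) > 0. Then for every t ≥ 0 and every nonzero X₀ ∈ ℝ², ‖exp(t·A) · X₀‖ < (p/p_R)·‖X₀‖, where exp is the matrix exponential and ‖·‖ is the Euclidean norm on ℝ². That is, for a reactive attractor with real eigenvalues and eigenvector separation radius δ_T, the maximal amplification is bounded above by 1/sin(2·δ_T) = p/p_R. -/

import Mathlib

open Real Matrix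

theorem exp_smul_idem' (P : Matrix (Fin 2) (Fin 2) ℝ) (hP : P * P = P) (s : ℝ) :
    NormedSpace.exp (s • P) = 1 + (Real.exp s - 1) • P := by
  letI : SeminormedRing (Matrix (Fin 2) (Fin 2) ℝ) := Matrix.linftyOpSemiNormedRing
  letI : NormedRing (Matrix (Fin 2) (Fin 2) ℝ) := Matrix.linftyOpNormedRing
  letI : NormedAlgebra ℝ (Matrix (Fin 2) (Fin 2) ℝ) := Matrix.linftyOpNormedAlgebra
  have hPpow : ∀ n : ℕ, P ^ (n + 1) = P := by
    intro n; induction n with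
    | zero => simp
    | succ k ih => rw [pow_succ, ih, hP]
  have hs : Summable (fun n : ℕ => ((Nat.factorial n : ℝ))⁻¹ • (s • P) ^ n) :=
    NormedSpace.expSeries_summable' (𝕂 := ℝ) (s • P)
  have hscal : Summable (fun n : ℕ => s ^ (n+1) / (Nat.factorial (n+1) : ℝ)) := by
    have := Real.summable_pow_div_factorial s
    exact this.comp_injective (add_left_injective 1)
  have hsum : (∑' n : ℕ, s ^ (n+1) / (Nat.factorial (n+1) : ℝ)) = Real.exp s - 1 := by
    have h1 : Real.exp s = ∑' n : ℕ, s ^ n / (Nat.factorial n : ℝ) := by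
      rw [Real.exp_eq_exp_ℝ, NormedSpace.exp_eq_tsum_div]
    have h2 : Summable (fun n : ℕ => s ^ n / (Nat.factorial n : ℝ)) :=
      Real.summable_pow_div_factorial s
    rw [Summable.tsum_eq_zero_add h2] at h1
    simp only [pow_zero, Nat.factorial_zero, Nat.cast_one, div_one] at h1
    linarith
  have : NormedSpace.exp (s • P) = ∑' n : ℕ, ((Nat.factorial n : ℝ))⁻¹ • (s • P) ^ n := by
    rw [NormedSpace.exp_eq_tsum (𝕂 := ℝ)]
  rw [this, Summable.tsum_eq_zero_add hs]
  congr 1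
  · simp
  · have heq : ∀ n : ℕ, (Nat.factorial (n+1) : ℝ)⁻¹ • (s • P) ^ (n+1)
        = (s ^ (n+1) / (Nat.factorial (n+1) : ℝ)) • P := by
      intro n
      rw [smul_pow, hPpow, smul_smul]
      congr 1
      field_simp
    simp only [heq]
    rw [Summable.tsum_smul_const hscal, hsum]


theorem key_quad_ineq (b c e pR p u v x₀ x₁ : ℝ)
    (hbc' : b * c = pR ^ 2 - e ^ 2) (hp2' : p ^ 2 = pR ^ 2 + ((c - b) / 2) ^ 2)
    (hpRpos : 0 < pR) (hMpos : 0 < ((c - b) / 2) ^ 2)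
    (hvpos : 0 < v) (hvu : v ≤ u) (hu1 : u ≤ 1) (hxx : 0 < x₀ ^ 2 + x₁ ^ 2) :
    ((u*(pR+e)+v*(pR-e))*x₀ + ((u-v)*b)*x₁)^2
      + (((u-v)*c)*x₀ + (u*(pR-e)+v*(pR+e))*x₁)^2 < 4*p^2*(x₀^2+x₁^2) := by
  obtain ⟨Q11, hQ11d⟩ : ∃ r : ℝ, r = 4*p^2 - (u*(pR+e)+v*(pR-e))^2 - c^2*(u-v)^2 := ⟨_, rfl⟩
  obtain ⟨Q22, hQ22d⟩ : ∃ r : ℝ, r = 4*p^2 - (u*(pR-e)+v*(pR+e))^2 - b^2*(u-v)^2 := ⟨_, rfl⟩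
  obtain ⟨Q12, hQ12d⟩ : ∃ r : ℝ,
      r = -((u-v)*(b*(u*(pR+e)+v*(pR-e)) + c*(u*(pR-e)+v*(pR+e)))) := ⟨_, rfl⟩
  have htrid : Q11 + Q22 = 4*pR^2*(2-u^2-v^2) + 4*((c-b)/2)^2*(2-(u-v)^2) := by
    rw [hQ11d, hQ22d]
    linear_combination (8:ℝ)*hp2' + (-2*v^2+4*u*v-2*u^2)*hbc'
  have hdetid : Q11*Q22 - Q12^2 =
      16*(pR^2*pR^2*((1-u^2)*(1-v^2)) + 2*(pR^2*((c-b)/2)^2)*((1-u^2-v^2)+u*v)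
        + ((c-b)/2)^2*((c-b)/2)^2*(1-(u-v)^2)) := by
    rw [hQ11d, hQ22d, hQ12d]
    linear_combination
      ((16)*(p^2) + (16)*pR^2 + (-8)*v^2*pR^2 + (-16)*u*v*pR^2 + (-8)*u^2*pR^2 + (4)*c^2
        + (-4)*c^2*v^2 + (8)*c^2*u*v + (-4)*c^2*u^2 + (-8)*b*c + (4)*b^2 + (-4)*b^2*v^2
        + (8)*b^2*u*v + (-4)*b^2*u^2 + (-8)*e^2*v^2 + (16)*e^2*u*v + (-8)*e^2*u^2) * hp2'
      + ((-8)*v^2*pR^2 + (-1)*v^4*pR^2 + (16)*u*v*pR^2 + (-4)*u*v^3*pR^2 + (-8)*u^2*pR^2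
        + (10)*u^2*v^2*pR^2 + (-4)*u^3*v*pR^2 + (-1)*u^4*pR^2 + (-2)*c^2*v^2 + (4)*c^2*u*v
        + (-2)*c^2*u^2 + (4)*b*c*v^2 + (1)*b*c*v^4 + (-8)*b*c*u*v + (-4)*b*c*u*v^3
        + (4)*b*c*u^2 + (6)*b*c*u^2*v^2 + (-4)*b*c*u^3*v + (1)*b*c*u^4 + (-2)*b^2*v^2
        + (4)*b^2*u*v + (-2)*b^2*u^2 + (1)*e^2*v^4 + (-4)*e^2*u*v^3 + (6)*e^2*u^2*v^2
        + (-4)*e^2*u^3*v + (1)*e^2*u^4) * hbc'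
  have hupos : 0 < u := lt_of_lt_of_le hvpos hvu
  have t1 : (0:ℝ) ≤ (1-u^2)*(1-v^2) := by
    apply mul_nonneg <;> nlinarith only [hu1, hvu, hvpos, hupos]
  have t2 : (0:ℝ) ≤ (1-u^2-v^2)+u*v := by
    nlinarith only [mul_nonneg hvpos.le (sub_nonneg.mpr hvu), hu1, hupos]
  have t3 : (0:ℝ) < 1-(u-v)^2 := by
    have : (0:ℝ) < (1-(u-v))*(1+(u-v)) :=
      mul_pos (by linarith) (by linarith)
    nlinarith only [this]
  have hdetpos : 0 < Q11*Q22 - Q12^2 := by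
    rw [hdetid]
    have a1 : (0:ℝ) ≤ pR^2*pR^2*((1-u^2)*(1-v^2)) :=
      mul_nonneg (mul_nonneg (sq_nonneg pR) (sq_nonneg pR)) t1
    have a2 : (0:ℝ) ≤ pR^2*((c-b)/2)^2*((1-u^2-v^2)+u*v) :=
      mul_nonneg (mul_nonneg (sq_nonneg pR) hMpos.le) t2
    have a3 : (0:ℝ) < ((c-b)/2)^2*((c-b)/2)^2*(1-(u-v)^2) :=
      mul_pos (mul_pos hMpos hMpos) t3
    nlinarith only [a1, a2, a3]
  have htrpos : 0 < Q11 + Q22 := by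
    rw [htrid]
    have b1 : (0:ℝ) ≤ pR^2*(2-u^2-v^2) :=
      mul_nonneg (sq_nonneg pR) (by nlinarith only [hu1, hvu, hvpos, hupos] : (0:ℝ) ≤ 2-u^2-v^2)
    have b2 : (0:ℝ) < ((c-b)/2)^2*(2-(u-v)^2) :=
      mul_pos hMpos (by nlinarith only [t3] : (0:ℝ) < 2-(u-v)^2)
    nlinarith only [b1, b2]
  have hQ11pos : 0 < Q11 := by
    nlinarith only [hdetpos, htrpos, sq_nonneg Q12]
  have hS : 0 < Q11*x₀^2 + 2*Q12*(x₀*x₁) + Q22*x₁^2 := by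
    rcases eq_or_ne x₁ 0 with hz | hz
    · subst hz
      have hx02 : 0 < x₀^2 := by nlinarith only [hxx]
      nlinarith only [mul_pos hQ11pos hx02]
    · have hx12 : 0 < x₁^2 := by positivity
      nlinarith only [sq_nonneg (Q11*x₀ + Q12*x₁), mul_pos hdetpos hx12, hQ11pos]
  have hform : 4*p^2*(x₀^2+x₁^2) - (((u*(pR+e)+v*(pR-e))*x₀ + ((u-v)*b)*x₁)^2
      + (((u-v)*c)*x₀ + (u*(pR-e)+v*(pR+e))*x₁)^2)
      = Q11*x₀^2 + 2*Q12*(x₀*x₁) + Q22*x₁^2 := by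
    rw [hQ11d, hQ22d, hQ12d]; ring
  linarith only [hform, hS]

set_option maxHeartbeats 1600000 in
theorem stmt_18 (a b c d : ℝ) (A : Matrix (Fin 2) (Fin 2) ℝ) (hA : A = !![a, b; c, d])
    (mR mT p : ℝ) (hmR : mR = (a + d) / 2) (hmT : mT = (c - b) / 2)
    (hp : p = (1 / 2) * Real.sqrt ((a - d) ^ 2 + (b + c) ^ 2))
    (htr : A.trace < 0) (hdet : 0 < A.det) (hreac : 0 < mR + p)
    (hreal : p > |mT|) (pR : ℝ) (hpR : pR = Real.sqrt (p ^ 2 - mT ^ 2)) :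
    0 < pR ∧
    ∀ t : ℝ, 0 ≤ t → ∀ X₀ : Fin 2 → ℝ, X₀ ≠ 0 →
      Real.sqrt (((NormedSpace.exp (t • A)).mulVec X₀ 0) ^ 2 +
          ((NormedSpace.exp (t • A)).mulVec X₀ 1) ^ 2) <
        (p / pR) * Real.sqrt ((X₀ 0) ^ 2 + (X₀ 1) ^ 2) := by
  -- basic scalar facts
  have hp2 : p ^ 2 = ((a - d) ^ 2 + (b + c) ^ 2) / 4 := by
    rw [hp, mul_pow, Real.sq_sqrt (by positivity)]; ring
  have hppos : 0 < p := lt_of_le_of_lt (abs_nonneg mT) hreal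
  have hmT2 : mT ^ 2 < p ^ 2 := by
    nlinarith only [hreal, abs_nonneg mT, sq_abs mT]
  have hpR2 : pR ^ 2 = p ^ 2 - mT ^ 2 := by
    rw [hpR, Real.sq_sqrt (by linarith)]
  have hpRpos : 0 < pR := by
    rw [hpR]; exact Real.sqrt_pos.mpr (by linarith)
  refine ⟨hpRpos, ?_⟩
  have htr' : a + d < 0 := by
    simpa [hA, Matrix.trace_fin_two] using htr
  have hdet' : 0 < a * d - b * c := by
    have := hdet; rw [hA, Matrix.det_fin_two_of] at this; linarith
  have hp2' : p ^ 2 = pR ^ 2 + ((c - b) / 2) ^ 2 := by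
    rw [hpR2, hmT]; ring
  have hmRneg : mR < 0 := by rw [hmR]; linarith
  have hdet2 : pR ^ 2 < mR ^ 2 := by
    have : mR ^ 2 - pR ^ 2 = a * d - b * c := by
      rw [hmR, hpR2, hp2, hmT]; ring
    linarith only [this, hdet']
  have hlam : mR + pR < 0 := by nlinarith only [hdet2, hmRneg, hpRpos]
  have hpRp : pR < p := by nlinarith only [hreac, hdet2, hmRneg, hpRpos]
  have hMpos : 0 < ((c - b) / 2) ^ 2 := by
    have h1 : 0 < (p - pR) * (p + pR) := mul_pos (by linarith) (by linarith)
    calc (0:ℝ) < (p - pR) * (p + pR) := h1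
      _ = ((c - b) / 2) ^ 2 := by linear_combination hp2'
  intro t ht X₀ hX₀
  obtain ⟨e, he⟩ : ∃ x : ℝ, x = (a - d) / 2 := ⟨_, rfl⟩
  have hbc' : b * c = pR ^ 2 - e ^ 2 := by
    rw [he, hpR2, hp2, hmT]; ring
  have hpRne : (2 * pR) ≠ 0 := by positivity
  obtain ⟨Wp, hWpd⟩ : ∃ M : Matrix (Fin 2) (Fin 2) ℝ, M = !![pR + e, b; c, pR - e] := ⟨_, rfl⟩
  obtain ⟨Wm, hWmd⟩ : ∃ M : Matrix (Fin 2) (Fin 2) ℝ, M = !![pR - e, -b; -c, pR + e] := ⟨_, rfl⟩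
  have hWW : Wp * Wp = (2 * pR) • Wp := by
    rw [hWpd]; ext i j
    fin_cases i <;> fin_cases j <;>
      simp [Matrix.mul_apply, Fin.sum_univ_two, Matrix.smul_apply] <;>
      first | ring1 | linear_combination hbc'
  have hMM : Wm * Wm = (2 * pR) • Wm := by
    rw [hWmd]; ext i j
    fin_cases i <;> fin_cases j <;>
      simp [Matrix.mul_apply, Fin.sum_univ_two, Matrix.smul_apply] <;>
      first | ring1 | linear_combination hbc'
  have hWM : Wp * Wm = 0 := by
    rw [hWpd, hWmd]; ext i j
    fin_cases i <;> fin_cases j <;>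
      simp [Matrix.mul_apply, Fin.sum_univ_two] <;>
      first | ring1 | linear_combination hbc' | linear_combination -hbc'
  have hMW : Wm * Wp = 0 := by
    rw [hWpd, hWmd]; ext i j
    fin_cases i <;> fin_cases j <;>
      simp [Matrix.mul_apply, Fin.sum_univ_two] <;>
      first | ring1 | linear_combination hbc' | linear_combination -hbc'
  have hsumW : Wp + Wm = (2 * pR) • (1 : Matrix (Fin 2) (Fin 2) ℝ) := by
    rw [hWpd, hWmd]; ext i j
    fin_cases i <;> fin_cases j <;>
      simp [Matrix.one_apply, Matrix.smul_apply] <;> ring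
  obtain ⟨Pp, hPpd⟩ : ∃ M : Matrix (Fin 2) (Fin 2) ℝ, M = (2 * pR)⁻¹ • Wp := ⟨_, rfl⟩
  obtain ⟨Pm, hPmd⟩ : ∃ M : Matrix (Fin 2) (Fin 2) ℝ, M = (2 * pR)⁻¹ • Wm := ⟨_, rfl⟩
  have hPp : Pp * Pp = Pp := by
    rw [hPpd, smul_mul_smul_comm, hWW, smul_smul]
    congr 1
    field_simp
  have hPm : Pm * Pm = Pm := by
    rw [hPmd, smul_mul_smul_comm, hMM, smul_smul]
    congr 1
    field_simp
  have hPpPm : Pp * Pm = 0 := by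
    rw [hPpd, hPmd, smul_mul_smul_comm, hWM, smul_zero]
  have hPmPp : Pm * Pp = 0 := by
    rw [hPpd, hPmd, smul_mul_smul_comm, hMW, smul_zero]
  have hone : Pp + Pm = 1 := by
    rw [hPpd, hPmd, ← smul_add, hsumW, smul_smul, inv_mul_cancel₀ hpRne, one_smul]
  have hsplit : t • A = (t * (mR + pR)) • Pp + (t * (mR - pR)) • Pm := by
    rw [hA, hPpd, hPmd, hWpd, hWmd, he, hmR]
    have hne : pR ≠ 0 := ne_of_gt hpRpos
    ext i j
    fin_cases i <;> fin_cases j <;>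
      · simp [Matrix.smul_apply, Matrix.add_apply]
        field_simp
        ring
  have hcomm : Commute ((t * (mR + pR)) • Pp) ((t * (mR - pR)) • Pm) := by
    have h1 : ((t * (mR + pR)) • Pp) * ((t * (mR - pR)) • Pm) = 0 := by
      rw [smul_mul_smul_comm, hPpPm, smul_zero]
    have h2 : ((t * (mR - pR)) • Pm) * ((t * (mR + pR)) • Pp) = 0 := by
      rw [smul_mul_smul_comm, hPmPp, smul_zero]
    exact h1.trans h2.symm
  obtain ⟨u, hu⟩ : ∃ r : ℝ, r = Real.exp (t * (mR + pR)) := ⟨_, rfl⟩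
  obtain ⟨v, hv⟩ : ∃ r : ℝ, r = Real.exp (t * (mR - pR)) := ⟨_, rfl⟩
  have hexp : NormedSpace.exp (t • A) = u • Pp + v • Pm := by
    rw [hsplit, Matrix.exp_add_of_commute _ _ hcomm,
      exp_smul_idem' Pp hPp, exp_smul_idem' Pm hPm, ← hu, ← hv]
    rw [mul_add, mul_one, add_mul, one_mul, smul_mul_smul_comm, hPpPm, smul_zero, add_zero]
    rw [← hone]
    module
  -- entries of the exponential
  have h0 : (NormedSpace.exp (t • A)).mulVec X₀ 0 =
      (2 * pR)⁻¹ * ((u * (pR + e) + v * (pR - e)) * X₀ 0 + ((u - v) * b) * X₀ 1) := by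
    rw [hexp, hPpd, hPmd, hWpd, hWmd]
    simp [Matrix.mulVec, dotProduct, Fin.sum_univ_two, Matrix.smul_apply]
    ring
  have h1 : (NormedSpace.exp (t • A)).mulVec X₀ 1 =
      (2 * pR)⁻¹ * (((u - v) * c) * X₀ 0 + (u * (pR - e) + v * (pR + e)) * X₀ 1) := by
    rw [hexp, hPpd, hPmd, hWpd, hWmd]
    simp [Matrix.mulVec, dotProduct, Fin.sum_univ_two, Matrix.smul_apply]
    ring
  -- facts about u and v
  have hvpos : 0 < v := by rw [hv]; exact Real.exp_pos _
  have hu1 : u ≤ 1 := by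
    rw [hu]
    have hα : t * (mR + pR) ≤ 0 := by nlinarith only [ht, hlam]
    exact Real.exp_le_one_iff.mpr hα
  have hvu : v ≤ u := by
    rw [hu, hv]
    exact Real.exp_le_exp.mpr (by nlinarith only [ht, hpRpos])
  obtain ⟨x₀, hx₀e⟩ : ∃ r : ℝ, X₀ 0 = r := ⟨_, rfl⟩
  obtain ⟨x₁, hx₁e⟩ : ∃ r : ℝ, X₀ 1 = r := ⟨_, rfl⟩
  have hxx : 0 < x₀ ^ 2 + x₁ ^ 2 := by
    by_contra hcon
    push_neg at hcon
    have hz0 : x₀ = 0 := by nlinarith only [hcon, sq_nonneg x₀, sq_nonneg x₁]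
    have hz1 : x₁ = 0 := by nlinarith only [hcon, sq_nonneg x₀, sq_nonneg x₁]
    apply hX₀
    funext i
    fin_cases i
    · show X₀ 0 = 0; rw [hx₀e, hz0]
    · show X₀ 1 = 0; rw [hx₁e, hz1]
  have hmain := key_quad_ineq b c e pR p u v x₀ x₁ hbc' hp2' hpRpos hMpos hvpos hvu hu1 hxx
  -- wrap up with square roots
  rw [h0, h1, hx₀e, hx₁e]
  have hrhs : (p / pR) * Real.sqrt (x₀^2+x₁^2) = Real.sqrt ((p/pR)^2 * (x₀^2+x₁^2)) := by
    rw [Real.sqrt_mul (by positivity), Real.sqrt_sq (by positivity)]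
  rw [hrhs]
  apply Real.sqrt_lt_sqrt (by positivity)
  have h1 : ((2*pR)⁻¹ * ((u*(pR+e)+v*(pR-e))*x₀ + ((u-v)*b)*x₁))^2
      + ((2*pR)⁻¹ * (((u-v)*c)*x₀ + (u*(pR-e)+v*(pR+e))*x₁))^2
      = ((((u*(pR+e)+v*(pR-e))*x₀ + ((u-v)*b)*x₁)^2
        + (((u-v)*c)*x₀ + (u*(pR-e)+v*(pR+e))*x₁)^2)) * ((2*pR)⁻¹)^2 := by ring
  have h2 : (p/pR)^2*(x₀^2+x₁^2) = (4*p^2*(x₀^2+x₁^2)) * ((2*pR)⁻¹)^2 := by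
    field_simp
    ring
  rw [h1, h2]
  exact mul_lt_mul_of_pos_right hmain (by positivity)
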